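/- arXiv:1910.02205 — 2 statements merged into one kernel-verified Lean document; each statement's English description precedes it below -/
import Mathlib

section
/- Let (X,d) be a metric space and let u, u_1, u_2, ... be fuzzy sets in F_USC(X). Then u_n Γ-converges to u if and only if for every α ∈ (0,1] one has closure({x : u(x) > α}) ⊆ liminf_{n→∞} [u_n]_α ⊆ limsup_{n→∞} [u_n]_α ⊆ [u]_α. -/
open Set Filter Metric Topology MeasureTheory

/-- The α-cut of a fuzzy set `u : X → ℝ`: for `α ≠ 0` it is `{x | u x ≥ α}`,
and for `α = 0` it is the closure of `{x | u x > 0}`. -/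
noncomputable def cut {X : Type*} [MetricSpace X] (u : X → ℝ) (α : ℝ) : Set X :=
  if α = 0 then closure {x | 0 < u x} else {x | α ≤ u x}

/-- `u` is a normal upper semicontinuous fuzzy set: it takes values in `[0,1]` and
all α-cuts (`α ∈ [0,1]`) are nonempty and closed. -/
def FUSC {X : Type*} [MetricSpace X] (u : X → ℝ) : Prop :=
  (∀ x, u x ∈ Set.Icc (0:ℝ) 1) ∧
    ∀ α ∈ Set.Icc (0:ℝ) 1, (cut u α).Nonempty ∧ IsClosed (cut u α)

/-- `F_USCG(X)`: fuzzy sets in `F_USC(X)` with compact positive α-cuts. -/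
def FUSCG {X : Type*} [MetricSpace X] (u : X → ℝ) : Prop :=
  FUSC u ∧ ∀ α ∈ Set.Ioc (0:ℝ) 1, IsCompact (cut u α)

/-- `F_USCB(X)`: fuzzy sets in `F_USC(X)` with compact support. -/
def FUSCB {X : Type*} [MetricSpace X] (u : X → ℝ) : Prop :=
  FUSC u ∧ IsCompact (cut u 0)

/-- Kuratowski lower limit of a sequence of sets. -/
def kurLiminf {Y : Type*} [MetricSpace Y] (C : ℕ → Set Y) : Set Y :=
  {y | ∃ f : ℕ → Y, (∀ n, f n ∈ C n) ∧ Tendsto f atTop (𝓝 y)}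

/-- Kuratowski upper limit of a sequence of sets. -/
def kurLimsup {Y : Type*} [MetricSpace Y] (C : ℕ → Set Y) : Set Y :=
  {y | ∃ φ : ℕ → ℕ, StrictMono φ ∧
        ∃ f : ℕ → Y, (∀ n, f n ∈ C (φ n)) ∧ Tendsto f atTop (𝓝 y)}

/-- Kuratowski convergence of a sequence of sets to a set. -/
def KurConv {Y : Type*} [MetricSpace Y] (C : ℕ → Set Y) (D : Set Y) : Prop :=
  kurLiminf C = D ∧ kurLimsup C = D

/-- The endograph of `u`: `{(x,t) ∈ X × [0,1] : u x ≥ t}`. -/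
def endo {X : Type*} [MetricSpace X] (u : X → ℝ) : Set (X × ℝ) :=
  {p | p.2 ∈ Set.Icc (0:ℝ) 1 ∧ p.2 ≤ u p.1}

/-- The sendograph of `u`: `end u ∩ ([u]₀ × [0,1])`. -/
noncomputable def sendo {X : Type*} [MetricSpace X] (u : X → ℝ) : Set (X × ℝ) :=
  endo u ∩ (cut u 0) ×ˢ (Set.Icc (0:ℝ) 1)

/-- Γ-convergence: Kuratowski convergence of endographs. -/
def GammaConv {X : Type*} [MetricSpace X] (un : ℕ → X → ℝ) (u : X → ℝ) : Prop :=
  KurConv (fun n => endo (un n)) (endo u)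

/-- The endograph metric. -/
noncomputable def Hend {X : Type*} [MetricSpace X] (u v : X → ℝ) : ℝ :=
  hausdorffDist (endo u) (endo v)

/-- The sendograph metric. -/
noncomputable def Hsend {X : Type*} [MetricSpace X] (u v : X → ℝ) : ℝ :=
  hausdorffDist (sendo u) (sendo v)

/-- The set of platform points of `u`:
`α ∈ (0,1)` with `closure {u > α}` a proper subset of `[u]_α`. -/
def Pset {X : Type*} [MetricSpace X] (u : X → ℝ) : Set ℝ :=
  {α | α ∈ Set.Ioo (0:ℝ) 1 ∧ closure {x | α < u x} ⊂ cut u α}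

/-- `P₀(u)`: the set of `α ∈ (0,1)` such that `H([u]_β, [u]_α)` does not tend to `0`
as `β → α`. -/
def P0set {X : Type*} [MetricSpace X] (u : X → ℝ) : Set ℝ :=
  {α | α ∈ Set.Ioo (0:ℝ) 1 ∧
    ¬ Tendsto (fun β => hausdorffDist (cut u β) (cut u α)) (𝓝[≠] α) (𝓝 0)}


private lemma kurLiminf_subset_kurLimsup' {Y : Type*} [MetricSpace Y] (C : ℕ → Set Y) :
    kurLiminf C ⊆ kurLimsup C := by
  rintro y ⟨f, hf, hconv⟩
  exact ⟨id, strictMono_id, f, hf, hconv⟩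

private lemma mem_kurLiminf_iff_infDist' {Y : Type*} [MetricSpace Y] {C : ℕ → Set Y}
    (hC : ∀ n, (C n).Nonempty) (y : Y) :
    y ∈ kurLiminf C ↔ Tendsto (fun n => Metric.infDist y (C n)) atTop (𝓝 0) := by
  constructor
  · rintro ⟨f, hf, hconv⟩
    have hd : Tendsto (fun n => dist y (f n)) atTop (𝓝 0) := by
      have := tendsto_iff_dist_tendsto_zero.mp hconv
      simpa [dist_comm] using this
    exact squeeze_zero (fun n => Metric.infDist_nonneg)
      (fun n => Metric.infDist_le_dist_of_mem (hf n)) hd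
  · intro h
    have hex : ∀ n, ∃ z ∈ C n, dist y z < Metric.infDist y (C n) + 1/(n+1) := by
      intro n
      refine (Metric.infDist_lt_iff (hC n)).mp ?_
      have : (0:ℝ) < 1/(n+1) := by positivity
      linarith
    choose f hf1 hf2 using hex
    have hg : Tendsto (fun n : ℕ => Metric.infDist y (C n) + 1/(n+1)) atTop (𝓝 0) := by
      have := h.add tendsto_one_div_add_atTop_nhds_zero_nat
      simpa using this
    have hd : Tendsto (fun n => dist (f n) y) atTop (𝓝 0) :=
      squeeze_zero (fun n => dist_nonneg)
        (fun n => by rw [dist_comm]; exact (hf2 n).le) hg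
    exact ⟨f, hf1, tendsto_iff_dist_tendsto_zero.mpr hd⟩

private lemma isClosed_infDist_set' {Y : Type*} [MetricSpace Y] (C : ℕ → Set Y) :
    IsClosed {y : Y | Tendsto (fun n => Metric.infDist y (C n)) atTop (𝓝 0)} := by
  refine isClosed_of_closure_subset ?_
  intro y hy
  rw [mem_setOf_eq, Metric.tendsto_atTop]
  intro ε hε
  obtain ⟨y', hy'S, hyy'⟩ := Metric.mem_closure_iff.mp hy (ε/2) (by linarith)
  obtain ⟨N, hN⟩ := Metric.tendsto_atTop.mp hy'S (ε/2) (by linarith)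
  refine ⟨N, fun n hn => ?_⟩
  have h1 := hN n hn
  rw [Real.dist_0_eq_abs, abs_of_nonneg Metric.infDist_nonneg] at h1 ⊢
  have h2 : Metric.infDist y (C n) ≤ Metric.infDist y' (C n) + dist y y' :=
    Metric.infDist_le_infDist_add_dist
  linarith

private lemma isClosed_kurLiminf' {Y : Type*} [MetricSpace Y] {C : ℕ → Set Y}
    (hC : ∀ n, (C n).Nonempty) : IsClosed (kurLiminf C) := by
  have : kurLiminf C = {y : Y | Tendsto (fun n => Metric.infDist y (C n)) atTop (𝓝 0)} := by
    ext y; exact mem_kurLiminf_iff_infDist' hC y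
  rw [this]
  exact isClosed_infDist_set' C

theorem gamma_convergence_iff_cut_sandwich_closure
    {X : Type*} [MetricSpace X] (u : X → ℝ) (un : ℕ → X → ℝ)
    (hu : FUSC u) (hun : ∀ n, FUSC (un n)) :
    GammaConv un u ↔
      ∀ α ∈ Set.Ioc (0:ℝ) 1,
        closure {x | α < u x} ⊆ kurLiminf (fun n => cut (un n) α) ∧
        kurLiminf (fun n => cut (un n) α) ⊆ kurLimsup (fun n => cut (un n) α) ∧
        kurLimsup (fun n => cut (un n) α) ⊆ cut u α := by
  have hcutne : ∀ (α : ℝ), α ∈ Set.Icc (0:ℝ) 1 → ∀ n, (cut (un n) α).Nonempty :=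
    fun α hα n => ((hun n).2 α hα).1
  have hendo_mem_zero : ∀ (v : X → ℝ), FUSC v → ∀ x : X, (x, (0:ℝ)) ∈ endo v := by
    intro v hv x
    exact ⟨⟨le_refl 0, zero_le_one⟩, (hv.1 x).1⟩
  have hendone : ∀ n, (endo (un n)).Nonempty := by
    intro n
    obtain ⟨x₀, _⟩ := hcutne 1 ⟨zero_le_one, le_refl 1⟩ n
    exact ⟨(x₀, 0), hendo_mem_zero (un n) (hun n) x₀⟩
  constructor
  · rintro ⟨hlim, hlimsup⟩ α hα
    have hcut_eq : ∀ v : X → ℝ, cut v α = {x | α ≤ v x} := fun v => if_neg (ne_of_gt hα.1)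
    have hcutne' : ∀ n, (cut (un n) α).Nonempty := hcutne α ⟨hα.1.le, hα.2⟩
    refine ⟨?_, kurLiminf_subset_kurLimsup' _, ?_⟩
    · -- closure {u > α} ⊆ kurLiminf cuts
      rw [(isClosed_kurLiminf' hcutne').closure_subset_iff]
      intro x hx
      have hx' : α < u x := hx
      have hmem : (x, u x) ∈ endo u := ⟨hu.1 x, le_refl _⟩
      rw [← hlim] at hmem
      obtain ⟨f, hf, hconv⟩ := hmem
      have hconv1 : Tendsto (fun n => (f n).1) atTop (𝓝 x) :=
        (continuous_fst.tendsto _).comp hconv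
      have hconv2 : Tendsto (fun n => (f n).2) atTop (𝓝 (u x)) :=
        (continuous_snd.tendsto _).comp hconv
      have hev : ∀ᶠ n in atTop, α < (f n).2 := hconv2.eventually (eventually_gt_nhds hx')
      classical
      refine ⟨fun n => if α ≤ un n (f n).1 then (f n).1 else (hcutne' n).choose, ?_, ?_⟩
      · intro n
        simp only [hcut_eq, Set.mem_setOf_eq]
        by_cases hc : α ≤ un n (f n).1
        · rw [if_pos hc]; exact hc
        · simp only [hc, if_false]
          have := (hcutne' n).choose_spec
          simpa only [hcut_eq, Set.mem_setOf_eq] using this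
      · refine hconv1.congr' ?_
        filter_upwards [hev] with n hn
        have : α ≤ un n (f n).1 := le_trans hn.le (hf n).2
        simp [this]
    · -- kurLimsup cuts ⊆ cut u α
      rintro x ⟨φ, hφ, f, hf, hconv⟩
      have hmem : (x, α) ∈ kurLimsup (fun n => endo (un n)) := by
        refine ⟨φ, hφ, fun n => (f n, α), fun n => ?_, ?_⟩
        · refine ⟨⟨hα.1.le, hα.2⟩, ?_⟩
          have : f n ∈ cut (un (φ n)) α := hf n
          simpa only [hcut_eq, Set.mem_setOf_eq] using this
        · exact hconv.prodMk_nhds tendsto_const_nhds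
      rw [hlimsup] at hmem
      simp only [hcut_eq, Set.mem_setOf_eq]
      exact hmem.2
  · intro h
    have hA : kurLimsup (fun n => endo (un n)) ⊆ endo u := by
      rintro ⟨x, t⟩ ⟨φ, hφ, f, hf, hconv⟩
      have hconv1 : Tendsto (fun n => (f n).1) atTop (𝓝 x) :=
        (continuous_fst.tendsto _).comp hconv
      have hconv2 : Tendsto (fun n => (f n).2) atTop (𝓝 t) :=
        (continuous_snd.tendsto _).comp hconv
      have ht01 : t ∈ Set.Icc (0:ℝ) 1 :=
        isClosed_Icc.mem_of_tendsto hconv2 (Eventually.of_forall fun n => (hf n).1)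
      refine ⟨ht01, ?_⟩
      by_contra hlt
      push_neg at hlt
      have hlt' : u x < t := hlt
      have ht1 : t ≤ 1 := ht01.2
      have hux0 : 0 ≤ u x := (hu.1 x).1
      set α := (u x + t) / 2 with hαdef
      have hαu : u x < α := by simp only [hαdef]; linarith
      have hαt : α < t := by simp only [hαdef]; linarith
      have hα0 : 0 < α := by simp only [hαdef]; linarith
      have hα1 : α ≤ 1 := le_of_lt (lt_of_lt_of_le hαt ht1)
      have hcut_eq : ∀ v : X → ℝ, cut v α = {x | α ≤ v x} := fun v => if_neg (ne_of_gt hα0)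
      obtain ⟨N, hN⟩ := (Metric.tendsto_atTop.mp hconv2 (t - α) (by linarith)).imp
        (fun N hN => hN)
      have hxmem : x ∈ kurLimsup (fun n => cut (un n) α) := by
        refine ⟨fun n => φ (n + N), fun a b hab => hφ (by omega),
          fun n => (f (n + N)).1, fun n => ?_, ?_⟩
        · simp only [hcut_eq, Set.mem_setOf_eq]
          have h1 := hN (n + N) (by omega)
          rw [Real.dist_eq] at h1
          have h2 : α ≤ (f (n + N)).2 := by
            rcases abs_lt.mp h1 with ⟨h3, _⟩
            linarith
          exact le_trans h2 (hf (n + N)).2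
        · exact hconv1.comp (tendsto_add_atTop_nat N)
      have hthis := (h α ⟨hα0, hα1⟩).2.2 hxmem
      rw [hcut_eq] at hthis
      exact absurd hthis (not_le.mpr hαu)
    have hB : endo u ⊆ kurLiminf (fun n => endo (un n)) := by
      rintro ⟨x, t⟩ ⟨ht01, htu⟩
      rcases eq_or_lt_of_le ht01.1 with h0 | h0
      · have h0' : t = 0 := h0.symm
        subst h0'
        exact ⟨fun n => (x, 0), fun n => hendo_mem_zero (un n) (hun n) x,
          tendsto_const_nhds⟩
      · have hclosed := isClosed_kurLiminf' hendone
        have hclaim : ∀ α : ℝ, 0 < α → α < t →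
            (x, α) ∈ kurLiminf (fun n => endo (un n)) := by
          intro α hα0 hαt
          have hα1 : α ≤ 1 := le_of_lt (lt_of_lt_of_le hαt ht01.2)
          have hcut_eq : ∀ v : X → ℝ, cut v α = {x | α ≤ v x} := fun v => if_neg (ne_of_gt hα0)
          have hxcl : x ∈ closure {y | α < u y} :=
            subset_closure (show α < u x from lt_of_lt_of_le hαt (show t ≤ u x from htu))
          obtain ⟨f, hf, hconv⟩ := (h α ⟨hα0, hα1⟩).1 hxcl
          refine ⟨fun n => (f n, α), fun n => ?_, hconv.prodMk_nhds tendsto_const_nhds⟩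
          refine ⟨⟨hα0.le, hα1⟩, ?_⟩
          have : f n ∈ cut (un n) α := hf n
          simpa only [hcut_eq, Set.mem_setOf_eq] using this
        have hseq : Tendsto (fun k : ℕ => t - t / (k + 2)) atTop (𝓝 t) := by
          have h1 : Tendsto (fun k : ℕ => t / (k + 2)) atTop (𝓝 0) := by
            have h2 := (tendsto_one_div_add_atTop_nhds_zero_nat (𝕜 := ℝ)).comp (tendsto_add_atTop_nat 1)
            have h3 : Tendsto (fun k : ℕ => 1 / ((k:ℝ) + 2)) atTop (𝓝 0) := by
              convert h2 using 2 with k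
              simp only [Function.comp_apply]
              push_cast
              ring
            have := h3.const_mul t
            simpa [div_eq_mul_inv, mul_comm] using this
          have hc : Tendsto (fun _ : ℕ => t) atTop (𝓝 t) := tendsto_const_nhds
          have := hc.sub h1
          simpa using this
        refine hclosed.mem_of_tendsto
          ((tendsto_const_nhds (x := x)).prodMk_nhds hseq) ?_
        refine Eventually.of_forall fun k => ?_
        have hk2 : (0:ℝ) < (k:ℝ) + 2 := by positivity
        have hd0 : 0 < t / ((k:ℝ) + 2) := by positivity
        have hdt : t / ((k:ℝ) + 2) < t := by
          rw [div_lt_iff₀ hk2]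
          nlinarith
        exact hclaim _ (by linarith) (by linarith)
    have hsub := kurLiminf_subset_kurLimsup' (fun n => endo (un n))
    exact ⟨Subset.antisymm (hsub.trans hA) hB, Subset.antisymm hA (hB.trans hsub)⟩
end

section
/- Let (X,d) be a metric space and let u, u_1, u_2, ... be fuzzy sets in F_USCG(X). Then the following statements are equivalent: (i) H_end(u_n, u) → 0; (ii) H([u_n]_α, [u]_α) → 0 for Lebesgue-almost every α ∈ (0,1); (iii) H([u_n]_α, [u]_α) → 0 for all α ∈ (0,1) \ P(u); (iv) H([u_n]_α, [u]_α) → 0 for all α in some dense subset P of (0,1) \ P(u); (v) H([u_n]_α, [u]_α) → 0 for all α in some countable dense subset P of (0,1) \ P(u). -/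
open Set Filter Metric Topology MeasureTheory

section Aux

variable {X : Type*} [MetricSpace X] {u v : X → ℝ} {α β : ℝ}

lemma cut_eq (u : X → ℝ) (h : α ≠ 0) : cut u α = {x | α ≤ u x} := if_neg h

lemma mem_cut (h : α ≠ 0) {x : X} : x ∈ cut u α ↔ α ≤ u x := by
  rw [cut_eq u h]; rfl

lemma cut_anti (u : X → ℝ) (hα : α ≠ 0) (hβ : β ≠ 0) (h : α ≤ β) :
    cut u β ⊆ cut u α := by
  rw [cut_eq u hα, cut_eq u hβ]
  exact fun x hx => le_trans h hx

lemma cut_nonempty (hu : FUSC u) (h : α ∈ Icc (0:ℝ) 1) : (cut u α).Nonempty :=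
  (hu.2 α h).1

lemma cut_closed (hu : FUSC u) (h : α ∈ Icc (0:ℝ) 1) : IsClosed (cut u α) :=
  (hu.2 α h).2

lemma cut_cpt (hu : FUSCG u) (h : α ∈ Ioc (0:ℝ) 1) : IsCompact (cut u α) :=
  hu.2 α h

lemma cutH_ne_top (hu : FUSCG u) (hv : FUSCG v) (hα : α ∈ Ioc (0:ℝ) 1)
    (hβ : β ∈ Ioc (0:ℝ) 1) : EMetric.hausdorffEdist (cut u α) (cut v β) ≠ ⊤ :=
  hausdorffEdist_ne_top_of_nonempty_of_bounded
    (cut_nonempty hu.1 ⟨hα.1.le, hα.2⟩) (cut_nonempty hv.1 ⟨hβ.1.le, hβ.2⟩)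
    (cut_cpt hu hα).isBounded (cut_cpt hv hβ).isBounded

lemma mem_endo_zero (hu : FUSC u) (x : X) : ((x, (0:ℝ))) ∈ endo u :=
  ⟨⟨le_refl _, zero_le_one⟩, (hu.1 x).1⟩

lemma endo_nonempty (hu : FUSC u) : (endo u).Nonempty := by
  obtain ⟨x, -⟩ := cut_nonempty hu ⟨zero_le_one, le_refl (1:ℝ)⟩
  exact ⟨(x, 0), mem_endo_zero hu x⟩

lemma endoH_ne_top (hu : FUSC u) (hv : FUSC v) :
    EMetric.hausdorffEdist (endo u) (endo v) ≠ ⊤ := by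
  have key : ∀ (w : X → ℝ), FUSC w → ∀ p ∈ endo u ∪ endo v,
      edist p ((p.1, (0:ℝ)) : X × ℝ) ≤ 1 := by
    intro w hw p hp
    have h1 : p.2 ∈ Icc (0:ℝ) 1 := by rcases hp with h | h <;> exact h.1
    rw [Prod.edist_eq, edist_self, edist_dist, Real.dist_eq, sub_zero,
      abs_of_nonneg h1.1]
    simp only [max_le_iff]
    exact ⟨zero_le, by rw [← ENNReal.ofReal_one]; exact ENNReal.ofReal_le_ofReal h1.2⟩
  have h1 : EMetric.hausdorffEdist (endo u) (endo v) ≤ 1 := by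
    apply EMetric.hausdorffEdist_le_of_mem_edist
    · intro p hp
      exact ⟨(p.1, 0), mem_endo_zero hv p.1, key u hu p (Or.inl hp)⟩
    · intro p hp
      exact ⟨(p.1, 0), mem_endo_zero hu p.1, key u hu p (Or.inr hp)⟩
  exact ne_top_of_le_ne_top ENNReal.one_ne_top h1

lemma tendsto_zero_of_le {f : ℕ → ℝ} (h0 : ∀ n, 0 ≤ f n)
    (h : ∀ ε : ℝ, 0 < ε → ∀ᶠ n in atTop, f n ≤ ε) :
    Tendsto f atTop (𝓝 0) := by
  rw [Metric.tendsto_atTop]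
  intro ε hε
  obtain ⟨N, hN⟩ := eventually_atTop.1 (h (ε/2) (by positivity))
  refine ⟨N, fun n hn => ?_⟩
  rw [Real.dist_eq, sub_zero, abs_of_nonneg (h0 n)]
  exact lt_of_le_of_lt (hN n hn) (by linarith)

end Aux
section Cont

variable {X : Type*} [MetricSpace X] {u v : X → ℝ} {α β : ℝ}

lemma left_cont (hu : FUSCG u) (hα : α ∈ Ioc (0:ℝ) 1) {ε : ℝ} (hε : 0 < ε) :
    ∃ β ∈ Ioo (0:ℝ) α, ∀ β' ∈ Ico β α, hausdorffDist (cut u β') (cut u α) ≤ ε := by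
  obtain ⟨hα0, hα1⟩ := hα
  have key : ∃ β ∈ Ioo (0:ℝ) α, ∀ x ∈ cut u β, infDist x (cut u α) ≤ ε := by
    by_contra hcon
    push_neg at hcon
    set b : ℕ → ℝ := fun k => α - α / (2 * (k + 1)) with hb
    have hbmem : ∀ k : ℕ, b k ∈ Ioo (0:ℝ) α := by
      intro k
      have h1 : (0:ℝ) < 2 * ((k:ℝ) + 1) := by positivity
      have h2 : α / (2 * ((k:ℝ) + 1)) ≤ α / 2 := by
        apply div_le_div_of_nonneg_left hα0.le (by norm_num)
        linarith [Nat.cast_nonneg (α := ℝ) k]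
      have h3 : 0 < α / (2 * ((k:ℝ) + 1)) := by positivity
      constructor
      · simp only [hb]; linarith
      · simp only [hb]; linarith
    have hbhalf : ∀ k : ℕ, α / 2 ≤ b k := by
      intro k
      have h2 : α / (2 * ((k:ℝ) + 1)) ≤ α / 2 := by
        apply div_le_div_of_nonneg_left hα0.le (by norm_num)
        linarith [Nat.cast_nonneg (α := ℝ) k]
      simp only [hb]; linarith
    choose x hx hdx using fun k => hcon (b k) (hbmem k)
    have hhalf : (α/2) ∈ Ioc (0:ℝ) 1 := ⟨by positivity, by linarith⟩
    have hxc : ∀ k, x k ∈ cut u (α/2) :=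
      fun k => cut_anti u (by positivity) (hbmem k).1.ne' (hbhalf k) (hx k)
    obtain ⟨a, ha, φ, hφ, hconv⟩ := (cut_cpt hu hhalf).tendsto_subseq hxc
    have haα : a ∈ cut u α := by
      rw [mem_cut hα0.ne']
      by_contra hlt
      push_neg at hlt
      have hua : α / 2 ≤ u a := (mem_cut (by positivity : α/2 ≠ 0)).1 ha
      set c : ℝ := (u a + α) / 2 with hc
      have hc1 : u a < c := by simp only [hc]; linarith
      have hc2 : c < α := by simp only [hc]; linarith
      have hc0 : 0 < c := by simp only [hc]; linarith
      have hcm : c ∈ Icc (0:ℝ) 1 := ⟨hc0.le, by linarith⟩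
      -- eventually b (φ k) ≥ c
      have hev : ∀ᶠ k in atTop, c ≤ b (φ k) := by
        obtain ⟨n, hn⟩ := exists_nat_one_div_lt (show 0 < 2*(α - c)/α from div_pos (by linarith) hα0)
        rw [eventually_atTop]
        refine ⟨n, fun k hk => ?_⟩
        have hφk : (n:ℝ) ≤ (φ k : ℝ) := by
          exact_mod_cast le_trans hk (hφ.le_apply)
        have h1 : (1:ℝ)/((φ k : ℝ)+1) ≤ 1/((n:ℝ)+1) :=
          one_div_le_one_div_of_le (by positivity) (by linarith)
        have h2 : (1:ℝ)/((φ k : ℝ)+1) < 2*(α - c)/α := lt_of_le_of_lt h1 hn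
        have h3 : α/(2*((φ k : ℝ)+1)) < α - c := by
          rw [div_lt_iff₀ (by positivity)]
          rw [div_lt_div_iff₀ (by positivity) hα0] at h2
          nlinarith
        simp only [hb]
        linarith
      have hmem2 : ∀ᶠ k in atTop, x (φ k) ∈ cut u c := by
        filter_upwards [hev] with k hk
        exact cut_anti u hc0.ne' (hbmem (φ k)).1.ne' hk (hx (φ k))
      have : a ∈ cut u c := (cut_closed hu.1 hcm).mem_of_tendsto hconv hmem2
      exact absurd ((mem_cut hc0.ne').1 this) (not_le.2 hc1)
    have h0 : infDist a (cut u α) = 0 := infDist_zero_of_mem haα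
    obtain ⟨K, hK⟩ := Metric.tendsto_atTop.1 hconv ε hε
    have h5 : ε < infDist (x (φ K)) (cut u α) := hdx (φ K)
    have h6 : infDist (x (φ K)) (cut u α) ≤ infDist a (cut u α) + dist (x (φ K)) a :=
      infDist_le_infDist_add_dist
    have h7 : dist (x (φ K)) a < ε := hK K le_rfl
    rw [h0] at h6
    linarith
  obtain ⟨b0, hb0, hprop⟩ := key
  refine ⟨b0, hb0, fun β' hβ' => ?_⟩
  have hβ'0 : (0:ℝ) < β' := lt_of_lt_of_le hb0.1 hβ'.1
  apply hausdorffDist_le_of_infDist hε.le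
  · intro x hx
    exact hprop x (cut_anti u hb0.1.ne' hβ'0.ne' hβ'.1 hx)
  · intro x hx
    have : x ∈ cut u β' := cut_anti u hβ'0.ne' hα0.ne' hβ'.2.le hx
    rw [infDist_zero_of_mem this]
    exact hε.le

end Cont
section Cont2

variable {X : Type*} [MetricSpace X] {u v : X → ℝ} {α β : ℝ}

lemma cut_eq_closure (hu : FUSC u) (hα : α ∈ Ioo (0:ℝ) 1) (hP : α ∉ Pset u) :
    cut u α = closure {x | α < u x} := by
  have hsub : closure {x | α < u x} ⊆ cut u α :=
    closure_minimal (fun x hx => (mem_cut hα.1.ne').2 (le_of_lt hx))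
      (cut_closed hu ⟨hα.1.le, hα.2.le⟩)
  by_contra hne
  exact hP ⟨hα, hsub.ssubset_of_ne (fun h => hne h.symm)⟩

lemma cover_lemma (hu : FUSCG u) (hα : α ∈ Ioo (0:ℝ) 1) (hP : α ∉ Pset u)
    {ε : ℝ} (hε : 0 < ε) :
    ∃ s : Finset X, s.Nonempty ∧ (∀ w ∈ s, α < u w) ∧
      ∀ z ∈ cut u α, ∃ w ∈ s, dist z w < ε := by
  classical
  have hcl := cut_eq_closure hu.1 hα hP
  have hcov : cut u α ⊆ ⋃ w : {x : X | α < u x}, ball (w : X) ε := by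
    intro z hz
    rw [hcl] at hz
    obtain ⟨w, hw, hd⟩ := Metric.mem_closure_iff.1 hz ε hε
    exact mem_iUnion.2 ⟨⟨w, hw⟩, mem_ball.2 hd⟩
  obtain ⟨t, ht⟩ := (cut_cpt hu ⟨hα.1, hα.2.le⟩).elim_finite_subcover
    (fun w : {x : X | α < u x} => ball (w : X) ε) (fun w => isOpen_ball) hcov
  set f : {x : X | α < u x} → X := Subtype.val with hf
  refine ⟨t.image f, ?_, ?_, ?_⟩
  · obtain ⟨z, hz⟩ := cut_nonempty hu.1 ⟨hα.1.le, hα.2.le⟩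
    obtain ⟨w, hw, -⟩ := mem_iUnion₂.1 (ht hz)
    exact ⟨f w, Finset.mem_image_of_mem f hw⟩
  · intro w hw
    obtain ⟨w', -, rfl⟩ := Finset.mem_image.1 hw
    exact w'.2
  · intro z hz
    obtain ⟨w, hw, hd⟩ := mem_iUnion₂.1 (ht hz)
    exact ⟨f w, Finset.mem_image_of_mem f hw, mem_ball.1 hd⟩

lemma right_cont (hu : FUSCG u) (hα : α ∈ Ioo (0:ℝ) 1) (hP : α ∉ Pset u)
    {ε : ℝ} (hε : 0 < ε) :
    ∃ γ ∈ Ioo α 1, ∀ γ' ∈ Ioc α γ, hausdorffDist (cut u γ') (cut u α) ≤ ε := by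
  obtain ⟨s, hne, hsu, hscov⟩ := cover_lemma hu hα hP hε
  set γ : ℝ := min (s.inf' hne u) ((α + 1) / 2) with hγ
  have hγα : α < γ := by
    apply lt_min ((Finset.lt_inf'_iff hne).2 hsu) (by linarith [hα.2])
  have hγ1 : γ < 1 := lt_of_le_of_lt (min_le_right _ _) (by linarith [hα.2])
  refine ⟨γ, ⟨hγα, hγ1⟩, fun γ' hγ' => ?_⟩
  have hγ'0 : 0 < γ' := lt_trans hα.1 hγ'.1
  apply hausdorffDist_le_of_infDist hε.le
  · intro x hx
    have : x ∈ cut u α := cut_anti u hα.1.ne' hγ'0.ne' hγ'.1.le hx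
    rw [infDist_zero_of_mem this]; exact hε.le
  · intro z hz
    obtain ⟨w, hw, hd⟩ := hscov z hz
    have hwγ : w ∈ cut u γ' := by
      rw [mem_cut hγ'0.ne']
      exact le_trans (le_trans hγ'.2 (min_le_left _ _)) (Finset.inf'_le _ hw)
    exact le_trans (infDist_le_dist_of_mem hwγ) hd.le

end Cont2
section PsetCountable

variable {X : Type*} [MetricSpace X] {u : X → ℝ}

lemma Pset_countable (hu : FUSCG u) : (Pset u).Countable := by
  have main : ∀ k : ℕ, (Pset u ∩ Ioo (1/((k:ℝ)+2)) 1).Countable := by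
    intro k
    set ε : ℝ := 1/((k:ℝ)+2) with hεdef
    have hε0 : 0 < ε := by positivity
    have hε1 : ε < 1 := by
      rw [hεdef, div_lt_one (by positivity)]
      linarith [Nat.cast_nonneg (α := ℝ) k]
    obtain ⟨D, hDc, hDsub⟩ := (cut_cpt hu ⟨hε0, hε1.le⟩).isSeparable
    set clamp : ℝ → ℝ := fun b => min (max b ε) 1 with hclamp
    have hclamp_mem : ∀ b, clamp b ∈ Ioc (0:ℝ) 1 :=
      fun b => ⟨lt_min (lt_of_lt_of_le hε0 (le_max_right b ε)) one_pos, min_le_right _ _⟩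
    have hclamp_mono : Monotone clamp :=
      fun b b' h => min_le_min (max_le_max h le_rfl) le_rfl
    set F : X → ℝ → ℝ := fun d b => infDist d (cut u (clamp b)) with hF
    have hmono : ∀ d, Monotone (F d) := by
      intro d b b' h
      exact infDist_le_infDist_of_subset
        (cut_anti u (hclamp_mem b).1.ne' (hclamp_mem b').1.ne' (hclamp_mono h))
        (cut_nonempty hu.1 ⟨(hclamp_mem b').1.le, (hclamp_mem b').2⟩)
    have hsub : Pset u ∩ Ioo ε 1 ⊆ ⋃ d ∈ D, {b : ℝ | ¬ContinuousAt (F d) b} := by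
      rintro α ⟨⟨hαIoo, hss⟩, hαε, hα1⟩
      obtain ⟨x, hxcut, hxS⟩ := exists_of_ssubset hss
      set S : Set X := closure {y : X | α < u y} with hS
      have hSne : S.Nonempty := by
        obtain ⟨w, hw⟩ := cut_nonempty hu.1 ⟨zero_le_one, le_refl (1:ℝ)⟩
        have : α < u w := lt_of_lt_of_le hα1 ((mem_cut one_ne_zero).1 hw)
        exact ⟨w, subset_closure this⟩
      have hr3 : 0 < infDist x S :=
        (isClosed_closure.notMem_iff_infDist_pos hSne).1 hxS
      set r : ℝ := infDist x S / 3 with hr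
      have hr0 : 0 < r := by positivity
      have hxε : x ∈ cut u ε := cut_anti u hε0.ne' hαIoo.1.ne' hαε.le hxcut
      obtain ⟨d, hd, hdx⟩ := Metric.mem_closure_iff.1 (hDsub hxε) r hr0
      refine mem_iUnion₂.2 ⟨d, hd, fun hcont => ?_⟩
      have hclampα : clamp α = α := by
        rw [hclamp]
        simp only [max_eq_left hαε.le, min_eq_left hα1.le]
      have hFα : F d α < r := by
        rw [hF]
        simp only [hclampα]
        calc infDist d (cut u α) ≤ dist d x := infDist_le_dist_of_mem hxcut
          _ < r := by rwa [dist_comm]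
      have hFβ : ∀ b ∈ Ioo α 1, 2*r ≤ F d b := by
        intro b hb
        have hclampb : clamp b = b := by
          rw [hclamp]
          simp only [max_eq_left (le_trans hαε.le hb.1.le), min_eq_left hb.2.le]
        have hb0 : 0 < b := lt_trans hαIoo.1 hb.1
        have hsubS : cut u b ⊆ S := by
          intro y hy
          exact subset_closure (lt_of_lt_of_le hb.1 ((mem_cut hb0.ne').1 hy))
        have h1 : infDist d S ≤ infDist d (cut u b) :=
          infDist_le_infDist_of_subset hsubS (cut_nonempty hu.1 ⟨hb0.le, hb.2.le⟩)
        have h2 : infDist x S ≤ infDist d S + dist x d := infDist_le_infDist_add_dist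
        rw [hF]; simp only [hclampb]
        linarith [hr3]
      have hev : ∀ᶠ b in 𝓝[>] α, F d b < r :=
        ((hcont.tendsto.eventually (Iio_mem_nhds hFα)).filter_mono nhdsWithin_le_nhds)
      have hev2 : ∀ᶠ b in 𝓝[>] α, b ∈ Ioo α 1 := Ioo_mem_nhdsGT_of_mem ⟨le_refl α, hαIoo.2⟩
      obtain ⟨b, hb1, hb2⟩ := (hev.and hev2).exists
      linarith [hFβ b hb2]
    exact Set.Countable.mono
      (fun α hα => hsub hα)
      (hDc.biUnion (fun d _ => (hmono d).countable_not_continuousAt))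
  have hcov : Pset u ⊆ ⋃ k : ℕ, (Pset u ∩ Ioo (1/((k:ℝ)+2)) 1) := by
    intro α hα
    obtain ⟨n, hn⟩ := exists_nat_one_div_lt hα.1.1
    refine mem_iUnion.2 ⟨n, hα, ?_, hα.1.2⟩
    calc 1/((n:ℝ)+2) < 1/((n:ℝ)+1) := by
          apply div_lt_div_of_pos_left one_pos (by positivity) (by linarith)
      _ < α := hn
  exact Set.Countable.mono hcov (countable_iUnion main)

end PsetCountable
section Imps

variable {X : Type*} [MetricSpace X] {u : X → ℝ} {un : ℕ → X → ℝ} {α : ℝ}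

lemma imp13 (hu : FUSCG u) (hun : ∀ n, FUSCG (un n))
    (h1 : Tendsto (fun n => Hend (un n) u) atTop (𝓝 0))
    (hα : α ∈ Ioo (0:ℝ) 1) (hP : α ∉ Pset u) :
    Tendsto (fun n => hausdorffDist (cut (un n) α) (cut u α)) atTop (𝓝 0) := by
  apply tendsto_zero_of_le (fun n => hausdorffDist_nonneg)
  intro ε hε
  set εq : ℝ := ε/2 with hεq
  have hεq0 : 0 < εq := by positivity
  have hαI : α ∈ Ioc (0:ℝ) 1 := ⟨hα.1, hα.2.le⟩
  obtain ⟨β, hβ, hβprop⟩ := left_cont hu hαI hεq0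
  obtain ⟨s, hsne, hsu, hscov⟩ := cover_lemma hu hα hP hεq0
  set δ : ℝ := s.inf' hsne u - α with hδ
  have hδ0 : 0 < δ := by
    rw [hδ, sub_pos]
    exact (Finset.lt_inf'_iff hsne).2 hsu
  set δ' : ℝ := min (min εq (α - β)) δ with hδ'
  have hδ'0 : 0 < δ' := lt_min (lt_min hεq0 (by linarith [hβ.2])) hδ0
  have hδ'ε : δ' ≤ εq := le_trans (min_le_left _ _) (min_le_left _ _)
  have hδ'β : δ' ≤ α - β := le_trans (min_le_left _ _) (min_le_right _ _)
  have hδ'δ : δ' ≤ δ := min_le_right _ _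
  have hev : ∀ᶠ n in atTop, Hend (un n) u < δ' := h1.eventually_lt_const hδ'0
  filter_upwards [hev] with n hn
  have hfin : EMetric.hausdorffEdist (endo (un n)) (endo u) ≠ ⊤ :=
    endoH_ne_top (hun n).1 hu.1
  have hβ'mem : α - δ' ∈ Ioc (0:ℝ) 1 := ⟨by linarith [hβ.1], by linarith [hα.2]⟩
  apply hausdorffDist_le_of_infDist (by positivity)
  · -- from cut (un n) α into cut u α
    intro x hx
    have hxe : ((x, α) : X × ℝ) ∈ endo (un n) := ⟨⟨hα.1.le, hα.2.le⟩, (mem_cut hα.1.ne').1 hx⟩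
    have hinf : infDist ((x, α) : X × ℝ) (endo u) < δ' :=
      lt_of_le_of_lt (infDist_le_hausdorffDist_of_mem hxe hfin) hn
    obtain ⟨p, hp, hpd⟩ := (infDist_lt_iff (endo_nonempty hu.1)).1 hinf
    obtain ⟨y, t⟩ := p
    rw [Prod.dist_eq, max_lt_iff] at hpd
    obtain ⟨hd1, hd2⟩ := hpd
    rw [Real.dist_eq, abs_lt] at hd2
    have hyt : α - δ' ≤ u y := le_trans (by linarith) hp.2
    have hymem : y ∈ cut u (α - δ') := (mem_cut hβ'mem.1.ne').2 hyt
    have hHu : hausdorffDist (cut u (α - δ')) (cut u α) ≤ εq :=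
      hβprop (α - δ') ⟨by linarith, by linarith⟩
    calc infDist x (cut u α) ≤ infDist y (cut u α) + dist x y := infDist_le_infDist_add_dist
      _ ≤ hausdorffDist (cut u (α - δ')) (cut u α) + dist x y :=
          add_le_add_left (infDist_le_hausdorffDist_of_mem hymem
            (cutH_ne_top hu hu hβ'mem hαI)) _
      _ ≤ εq + δ' := add_le_add hHu hd1.le
      _ ≤ ε := by rw [hεq] at hδ'ε ⊢; linarith
  · -- from cut u α into cut (un n) α
    intro z hz
    obtain ⟨w, hws, hwd⟩ := hscov z hz
    have hwe : ((w, u w) : X × ℝ) ∈ endo u := ⟨hu.1.1 w, le_refl _⟩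
    have hfin' : EMetric.hausdorffEdist (endo u) (endo (un n)) ≠ ⊤ :=
      endoH_ne_top hu.1 (hun n).1
    have hinf : infDist ((w, u w) : X × ℝ) (endo (un n)) < δ' := by
      apply lt_of_le_of_lt (infDist_le_hausdorffDist_of_mem hwe hfin')
      rw [hausdorffDist_comm]
      exact hn
    obtain ⟨p, hp, hpd⟩ := (infDist_lt_iff (endo_nonempty (hun n).1)).1 hinf
    obtain ⟨z', t⟩ := p
    rw [Prod.dist_eq, max_lt_iff] at hpd
    obtain ⟨hd1, hd2⟩ := hpd
    rw [Real.dist_eq, abs_lt] at hd2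
    have ht : α < t := by
      have : δ ≤ u w - α := by
        rw [hδ]
        have := Finset.inf'_le u hws
        linarith
      linarith
    have hz'mem : z' ∈ cut (un n) α := (mem_cut hα.1.ne').2 (le_trans ht.le hp.2)
    calc infDist z (cut (un n) α) ≤ dist z z' := infDist_le_dist_of_mem hz'mem
      _ ≤ dist z w + dist w z' := dist_triangle _ _ _
      _ ≤ εq + δ' := add_le_add hwd.le hd1.le
      _ ≤ ε := by rw [hεq] at hδ'ε ⊢; linarith

end Imps
section Imps2

variable {X : Type*} [MetricSpace X] {u : X → ℝ} {un : ℕ → X → ℝ} {α : ℝ}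

lemma imp32 (hu : FUSCG u) (hun : ∀ n, FUSCG (un n))
    (h3 : ∀ α ∈ Set.Ioo (0:ℝ) 1 \ Pset u,
      Tendsto (fun n => hausdorffDist (cut (un n) α) (cut u α)) atTop (𝓝 0)) :
    ∀ᵐ α ∂(volume : Measure ℝ), α ∈ Set.Ioo (0:ℝ) 1 →
      Tendsto (fun n => hausdorffDist (cut (un n) α) (cut u α)) atTop (𝓝 0) := by
  have hnull : volume (Pset u) = 0 := (Pset_countable hu).measure_zero _
  rw [MeasureTheory.ae_iff]
  apply measure_mono_null _ hnull
  intro α hα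
  simp only [Set.mem_setOf_eq] at hα
  push_neg at hα
  by_contra hP
  exact hα.2 (h3 α ⟨hα.1, hP⟩)

lemma imp23 (hu : FUSCG u) (hun : ∀ n, FUSCG (un n))
    (h2 : ∀ᵐ α ∂(volume : Measure ℝ), α ∈ Set.Ioo (0:ℝ) 1 →
      Tendsto (fun n => hausdorffDist (cut (un n) α) (cut u α)) atTop (𝓝 0)) :
    ∀ α ∈ Set.Ioo (0:ℝ) 1 \ Pset u,
      Tendsto (fun n => hausdorffDist (cut (un n) α) (cut u α)) atTop (𝓝 0) := by
  rintro α ⟨hα, hP⟩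
  set N : Set ℝ := {β : ℝ | ¬ (β ∈ Set.Ioo (0:ℝ) 1 →
    Tendsto (fun n => hausdorffDist (cut (un n) β) (cut u β)) atTop (𝓝 0))} with hN
  have hNnull : volume N = 0 := MeasureTheory.ae_iff.1 h2
  have hpick : ∀ a b : ℝ, a < b → (Set.Ioo a b \ N).Nonempty := by
    intro a b hab
    by_contra hcon
    rw [Set.not_nonempty_iff_eq_empty, Set.diff_eq_empty] at hcon
    have := measure_mono_null hcon hNnull
    rw [Real.volume_Ioo] at this
    exact (ENNReal.ofReal_pos.2 (by linarith)).ne' this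
  have hαI : α ∈ Ioc (0:ℝ) 1 := ⟨hα.1, hα.2.le⟩
  apply tendsto_zero_of_le (fun n => hausdorffDist_nonneg)
  intro ε hε
  set εq : ℝ := ε/4 with hεq
  have hεq0 : 0 < εq := by positivity
  obtain ⟨β₀, hβ₀, hβprop⟩ := left_cont hu hαI hεq0
  obtain ⟨γ₀, hγ₀, hγprop⟩ := right_cont hu hα hP hεq0
  obtain ⟨β, hβI, hβN⟩ := hpick β₀ α hβ₀.2
  obtain ⟨γ, hγI, hγN⟩ := hpick α γ₀ hγ₀.1
  have hβmem : β ∈ Set.Ioo (0:ℝ) 1 := ⟨lt_trans hβ₀.1 hβI.1, lt_trans hβI.2 hα.2⟩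
  have hγmem : γ ∈ Set.Ioo (0:ℝ) 1 := ⟨lt_trans hα.1 hγI.1, lt_trans hγI.2 hγ₀.2⟩
  have hβc : Tendsto (fun n => hausdorffDist (cut (un n) β) (cut u β)) atTop (𝓝 0) := by
    have h' := hβN
    simp only [hN, Set.mem_setOf_eq, not_not] at h'
    exact h' hβmem
  have hγc : Tendsto (fun n => hausdorffDist (cut (un n) γ) (cut u γ)) atTop (𝓝 0) := by
    have h' := hγN
    simp only [hN, Set.mem_setOf_eq, not_not] at h'
    exact h' hγmem
  have hβH : hausdorffDist (cut u β) (cut u α) ≤ εq := hβprop β ⟨hβI.1.le, hβI.2⟩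
  have hγH : hausdorffDist (cut u γ) (cut u α) ≤ εq := hγprop γ ⟨hγI.1, hγI.2.le⟩
  have hβIoc : β ∈ Ioc (0:ℝ) 1 := ⟨hβmem.1, hβmem.2.le⟩
  have hγIoc : γ ∈ Ioc (0:ℝ) 1 := ⟨hγmem.1, hγmem.2.le⟩
  filter_upwards [hβc.eventually_lt_const hεq0, hγc.eventually_lt_const hεq0] with n hnβ hnγ
  apply hausdorffDist_le_of_infDist (by positivity)
  · intro x hx
    have hx' : x ∈ cut (un n) β :=
      cut_anti (un n) hβmem.1.ne' hα.1.ne' hβI.2.le hx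
    calc infDist x (cut u α)
        ≤ infDist x (cut u β) + hausdorffDist (cut u β) (cut u α) :=
          infDist_le_infDist_add_hausdorffDist (cutH_ne_top hu hu hβIoc hαI)
      _ ≤ hausdorffDist (cut (un n) β) (cut u β) + hausdorffDist (cut u β) (cut u α) :=
          add_le_add_left (infDist_le_hausdorffDist_of_mem hx'
            (cutH_ne_top (hun n) hu hβIoc hβIoc)) _
      _ ≤ εq + εq := add_le_add hnβ.le hβH
      _ ≤ ε := by rw [hεq]; linarith
  · intro y hy
    have hsub : cut (un n) γ ⊆ cut (un n) α :=
      cut_anti (un n) hα.1.ne' hγmem.1.ne' hγI.1.le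
    calc infDist y (cut (un n) α)
        ≤ infDist y (cut (un n) γ) :=
          infDist_le_infDist_of_subset hsub (cut_nonempty (hun n).1 ⟨hγmem.1.le, hγmem.2.le⟩)
      _ ≤ infDist y (cut u γ) + hausdorffDist (cut u γ) (cut (un n) γ) :=
          infDist_le_infDist_add_hausdorffDist (cutH_ne_top hu (hun n) hγIoc hγIoc)
      _ ≤ hausdorffDist (cut u α) (cut u γ) + hausdorffDist (cut u γ) (cut (un n) γ) :=
          add_le_add_left (infDist_le_hausdorffDist_of_mem hy
            (cutH_ne_top hu hu hαI hγIoc)) _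
      _ ≤ εq + εq := by
          rw [hausdorffDist_comm (s := cut u α) (t := cut u γ),
            hausdorffDist_comm (s := cut u γ) (t := cut (un n) γ)]
          exact add_le_add hγH hnγ.le
      _ ≤ ε := by rw [hεq]; linarith

end Imps2
section Imps3

variable {X : Type*} [MetricSpace X] {u v w : X → ℝ} {un : ℕ → X → ℝ} {α : ℝ}

lemma grid_half (hv : FUSC v) (hw : FUSC w) {N : ℕ} (hN0 : 0 < N)
    {g : ℕ → ℝ} (hg : ∀ i, i < N → g i ∈ Ioo ((i:ℝ)/N) (((i:ℝ)+1)/N))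
    {r : ℝ} (hr : 0 ≤ r)
    (hH : ∀ i, i < N → ∀ x ∈ cut v (g i), infDist x (cut w (g i)) ≤ r) :
    ∀ p ∈ endo v, infDist p (endo w) ≤ r + 2 / N := by
  rintro ⟨x, t⟩ ⟨⟨ht0, ht1⟩, htu⟩
  have hNR : (0:ℝ) < N := by exact_mod_cast hN0
  have hgmem : ∀ i, i < N → g i ∈ Ioo (0:ℝ) 1 := by
    intro i hi
    obtain ⟨h1, h2⟩ := hg i hi
    constructor
    · exact lt_of_le_of_lt (by positivity) h1
    · apply lt_of_lt_of_le h2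
      rw [div_le_one hNR]
      have : (i:ℝ) + 1 ≤ N := by exact_mod_cast hi
      linarith
  by_cases hsmall : t ≤ 2 / N
  · calc infDist ((x, t) : X × ℝ) (endo w) ≤ dist ((x, t) : X × ℝ) ((x, 0) : X × ℝ) :=
        infDist_le_dist_of_mem (mem_endo_zero hw x)
      _ = t := by
        rw [Prod.dist_eq, dist_self, Real.dist_eq, sub_zero, abs_of_nonneg ht0]
        exact max_eq_right ht0
      _ ≤ r + 2 / N := by linarith
  push_neg at hsmall
  set m : ℕ := Nat.ceil (t * N) with hm
  have htN : t * N ≤ m := Nat.le_ceil _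
  have hmlt : (m:ℝ) < t * N + 1 := Nat.ceil_lt_add_one (by positivity)
  have h2m : (2:ℝ) < t * N := by
    rw [div_lt_iff₀ hNR] at hsmall
    linarith
  have hm3 : 3 ≤ m := by
    have : (2:ℝ) < (m:ℝ) := lt_of_lt_of_le h2m htN
    exact_mod_cast Nat.lt_of_lt_of_le (by exact_mod_cast this) le_rfl
  have hmN : m ≤ N := by
    rw [hm]
    apply Nat.ceil_le.2
    calc t * N ≤ 1 * N := by nlinarith
      _ = (N:ℕ) := by simp
  set j : ℕ := m - 2 with hj
  have hjN : j < N := by omega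
  have hjcast : (j:ℝ) = (m:ℝ) - 2 := by
    rw [hj]
    have : (2:ℕ) ≤ m := by omega
    push_cast [Nat.cast_sub this]
    ring
  obtain ⟨hgj1, hgj2⟩ := hg j hjN
  have hgj0 : 0 < g j := (hgmem j hjN).1
  have hβt : g j < t := by
    apply lt_of_lt_of_le hgj2
    rw [div_le_iff₀ hNR, hjcast]
    linarith
  have hgap : t - g j ≤ 2 / N := by
    have h1 : ((m:ℝ) - 2) / N < g j := by rwa [hjcast] at hgj1
    have h2 : t ≤ (m:ℝ) / N := by
      rw [le_div_iff₀ hNR]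
      linarith
    have h3 : (m:ℝ)/N - ((m:ℝ)-2)/N = 2/N := by ring
    linarith
  have hxv : x ∈ cut v (g j) := (mem_cut hgj0.ne').2 (le_trans hβt.le htu)
  have hwne : (cut w (g j)).Nonempty := cut_nonempty hw ⟨hgj0.le, (hgmem j hjN).2.le⟩
  have key : infDist ((x, t) : X × ℝ) (endo w) ≤ infDist x (cut w (g j)) + (t - g j) := by
    apply le_of_forall_pos_le_add
    intro η hη
    obtain ⟨y, hy, hyd⟩ := (infDist_lt_iff hwne).1
      (lt_add_of_le_of_pos (le_refl (infDist x (cut w (g j)))) hη)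
    have hye : ((y, g j) : X × ℝ) ∈ endo w :=
      ⟨⟨hgj0.le, (hgmem j hjN).2.le⟩, (mem_cut hgj0.ne').1 hy⟩
    calc infDist ((x, t) : X × ℝ) (endo w) ≤ dist ((x, t) : X × ℝ) ((y, g j) : X × ℝ) :=
        infDist_le_dist_of_mem hye
      _ ≤ max (dist x y) (t - g j) := by
        rw [Prod.dist_eq, Real.dist_eq, abs_of_nonneg (by linarith : (0:ℝ) ≤ t - g j)]
      _ ≤ dist x y + (t - g j) := max_le (by linarith [hβt.le]) (by linarith [dist_nonneg (x := x) (y := y)])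
      _ ≤ infDist x (cut w (g j)) + (t - g j) + η := by linarith
  calc infDist ((x, t) : X × ℝ) (endo w) ≤ infDist x (cut w (g j)) + (t - g j) := key
    _ ≤ r + 2 / N := add_le_add (hH j hjN x hxv) hgap

end Imps3
section Imps4

variable {X : Type*} [MetricSpace X] {u : X → ℝ} {un : ℕ → X → ℝ}

lemma imp41 (hu : FUSCG u) (hun : ∀ n, FUSCG (un n))
    (h4 : ∃ P : Set ℝ, P ⊆ Set.Ioo (0:ℝ) 1 \ Pset u ∧
      (Set.Ioo (0:ℝ) 1 \ Pset u) ⊆ closure P ∧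
      ∀ α ∈ P,
        Tendsto (fun n => hausdorffDist (cut (un n) α) (cut u α)) atTop (𝓝 0)) :
    Tendsto (fun n => Hend (un n) u) atTop (𝓝 0) := by
  obtain ⟨P, hP1, hP2, hP3⟩ := h4
  have hdense : ∀ a b : ℝ, 0 ≤ a → b ≤ 1 → a < b → ∃ c ∈ P, c ∈ Ioo a b := by
    intro a b ha hb hab
    have hnsub : ¬ (Ioo a b ⊆ Pset u) := by
      intro hsub
      have h0 := measure_mono_null hsub ((Pset_countable hu).measure_zero volume)
      rw [Real.volume_Ioo] at h0
      exact (ENNReal.ofReal_pos.2 (by linarith)).ne' h0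
    obtain ⟨c, hc, hcP⟩ := not_subset.1 hnsub
    have hccl : c ∈ closure P :=
      hP2 ⟨⟨lt_of_le_of_lt ha hc.1, lt_of_lt_of_le hc.2 hb⟩, hcP⟩
    obtain ⟨c', hc'P, hc'I⟩ := _root_.mem_closure_iff.1 hccl (Ioo a b) isOpen_Ioo hc
    exact ⟨c', hc'I, hc'P⟩
  apply tendsto_zero_of_le (fun n => hausdorffDist_nonneg)
  intro ε hε
  set εq : ℝ := ε/4 with hεq
  have hεq0 : 0 < εq := by positivity
  obtain ⟨N, hN⟩ := exists_nat_gt (2/εq)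
  have hN2 : 0 < 2/εq := by positivity
  have hNR : (0:ℝ) < N := lt_trans hN2 hN
  have hN0 : 0 < N := by exact_mod_cast hNR
  have h2N : 2 / (N:ℝ) < εq := by
    rw [div_lt_iff₀ hNR]
    rw [div_lt_iff₀ hεq0] at hN
    linarith [mul_comm (N:ℝ) εq]
  have hpick : ∀ i : ℕ, i < N → ∃ c ∈ P, c ∈ Ioo ((i:ℝ)/N) (((i:ℝ)+1)/N) := by
    intro i hi
    apply hdense _ _ (by positivity) _ _
    · rw [div_le_one hNR]
      have : (i:ℝ) + 1 ≤ N := by exact_mod_cast hi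
      linarith
    · rw [div_lt_div_iff_of_pos_right hNR]
      linarith
  choose! g hgP hg using hpick
  have hgmem : ∀ i, i < N → g i ∈ Ioc (0:ℝ) 1 := by
    intro i hi
    obtain ⟨h1, h2⟩ := hg i hi
    refine ⟨lt_of_le_of_lt (by positivity) h1, le_of_lt (lt_of_lt_of_le h2 ?_)⟩
    rw [div_le_one hNR]
    have : (i:ℝ) + 1 ≤ N := by exact_mod_cast hi
    linarith
  have hev : ∀ᶠ n in atTop, ∀ i ∈ Finset.range N,
      hausdorffDist (cut (un n) (g i)) (cut u (g i)) ≤ εq := by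
    rw [Filter.eventually_all_finset]
    intro i hi
    exact ((hP3 (g i) (hgP i (Finset.mem_range.1 hi))).eventually_lt_const hεq0).mono
      (fun n hn => hn.le)
  filter_upwards [hev] with n hn
  have hn' : ∀ i, i < N → hausdorffDist (cut (un n) (g i)) (cut u (g i)) ≤ εq :=
    fun i hi => hn i (Finset.mem_range.2 hi)
  have hside1 : ∀ p ∈ endo (un n), infDist p (endo u) ≤ εq + 2 / N := by
    apply grid_half (hun n).1 hu.1 hN0 hg hεq0.le
    intro i hi x hx
    exact le_trans (infDist_le_hausdorffDist_of_mem hx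
      (cutH_ne_top (hun n) hu (hgmem i hi) (hgmem i hi))) (hn' i hi)
  have hside2 : ∀ p ∈ endo u, infDist p (endo (un n)) ≤ εq + 2 / N := by
    apply grid_half hu.1 (hun n).1 hN0 hg hεq0.le
    intro i hi x hx
    refine le_trans (infDist_le_hausdorffDist_of_mem hx ?_) ?_
    · exact cutH_ne_top hu (hun n) (hgmem i hi) (hgmem i hi)
    · rw [hausdorffDist_comm]
      exact hn' i hi
  have : Hend (un n) u ≤ εq + 2 / N :=
    hausdorffDist_le_of_infDist (by positivity) hside1 hside2
  apply le_trans this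
  rw [hεq] at h2N ⊢
  linarith

lemma imp45 (hu : FUSCG u)
    (h4 : ∃ P : Set ℝ, P ⊆ Set.Ioo (0:ℝ) 1 \ Pset u ∧
      (Set.Ioo (0:ℝ) 1 \ Pset u) ⊆ closure P ∧
      ∀ α ∈ P,
        Tendsto (fun n => hausdorffDist (cut (un n) α) (cut u α)) atTop (𝓝 0)) :
    ∃ P : Set ℝ, P.Countable ∧ P ⊆ Set.Ioo (0:ℝ) 1 \ Pset u ∧
      (Set.Ioo (0:ℝ) 1 \ Pset u) ⊆ closure P ∧
      ∀ α ∈ P,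
        Tendsto (fun n => hausdorffDist (cut (un n) α) (cut u α)) atTop (𝓝 0) := by
  obtain ⟨P, hP1, hP2, hP3⟩ := h4
  obtain ⟨Q, hQc, hQd⟩ := TopologicalSpace.exists_countable_dense (↥P)
  refine ⟨Subtype.val '' Q, hQc.image _, ?_, ?_, ?_⟩
  · rintro _ ⟨q, hq, rfl⟩
    exact hP1 q.2
  · have h1 : P ⊆ closure (Subtype.val '' Q) := Subtype.dense_iff.1 hQd
    exact hP2.trans ((closure_mono h1).trans (by rw [closure_closure]))
  · rintro _ ⟨q, hq, rfl⟩
    exact hP3 q q.2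

end Imps4

theorem endograph_metric_level_decomposition_tfae
    {X : Type*} [MetricSpace X] (u : X → ℝ) (un : ℕ → X → ℝ)
    (hu : FUSCG u) (hun : ∀ n, FUSCG (un n)) :
    List.TFAE
      [ Tendsto (fun n => Hend (un n) u) atTop (𝓝 0),
        ∀ᵐ α ∂(volume : Measure ℝ), α ∈ Set.Ioo (0:ℝ) 1 →
          Tendsto (fun n => hausdorffDist (cut (un n) α) (cut u α)) atTop (𝓝 0),
        ∀ α ∈ Set.Ioo (0:ℝ) 1 \ Pset u,
          Tendsto (fun n => hausdorffDist (cut (un n) α) (cut u α)) atTop (𝓝 0),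
        ∃ P : Set ℝ, P ⊆ Set.Ioo (0:ℝ) 1 \ Pset u ∧
          (Set.Ioo (0:ℝ) 1 \ Pset u) ⊆ closure P ∧
          ∀ α ∈ P,
            Tendsto (fun n => hausdorffDist (cut (un n) α) (cut u α)) atTop (𝓝 0),
        ∃ P : Set ℝ, P.Countable ∧ P ⊆ Set.Ioo (0:ℝ) 1 \ Pset u ∧
          (Set.Ioo (0:ℝ) 1 \ Pset u) ⊆ closure P ∧
          ∀ α ∈ P,
            Tendsto (fun n => hausdorffDist (cut (un n) α) (cut u α)) atTop (𝓝 0) ] := by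
  tfae_have 1 → 3 := fun h1 α hα => imp13 hu hun h1 hα.1 hα.2
  tfae_have 3 → 2 := imp32 hu hun
  tfae_have 2 → 3 := imp23 hu hun
  tfae_have 3 → 4 := fun h3 => ⟨Set.Ioo (0:ℝ) 1 \ Pset u, subset_rfl, subset_closure, h3⟩
  tfae_have 4 → 5 := imp45 hu
  tfae_have 5 → 4 := fun ⟨P, _, h2, h3, h4⟩ => ⟨P, h2, h3, h4⟩
  tfae_have 4 → 1 := imp41 hu hun
  tfae_finish
end
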